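/- Let N_s be a positive integer and, for each n in {1,…,N_s}, let d_n > 0, c_n > 0 and P_n > 0 be real numbers with 1/d_n − c_n ≤ P_n (so the spectral mask is never active), and let P > 0. Define p_n(λ) = min(P_n, max(0, 1/(λ + d_n) − c_n)) for λ ≥ 0. Then there exists a UNIQUE λ ≥ 0 such that Σ_{n=1}^{N_s} p_n(λ) ≤ P and λ·(P − Σ_{n=1}^{N_s} p_n(λ)) = 0. -/

import Mathlib

open Finset

/-- Theorem 1: when the spectral masks are never active (`1/d n - c n ≤ P n`), there is a
UNIQUE Lagrange multiplier `lam ≥ 0` satisfying the total power constraint together with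
complementary slackness for the clipped water-filling allocation. -/
theorem stmt_1 (Ns : ℕ) (hNs : 0 < Ns) (d c P : Fin Ns → ℝ)
    (hd : ∀ n, 0 < d n) (hc : ∀ n, 0 < c n) (hP : ∀ n, 0 < P n)
    (hmask : ∀ n, 1 / d n - c n ≤ P n)
    (Ptot : ℝ) (hPtot : 0 < Ptot) :
    ∃! lam : ℝ, 0 ≤ lam ∧
      (∑ n, min (P n) (max 0 (1 / (lam + d n) - c n))) ≤ Ptot ∧
      lam * (Ptot - ∑ n, min (P n) (max 0 (1 / (lam + d n) - c n))) = 0 := by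
  set g : ℝ → Fin Ns → ℝ := fun lam n => max 0 (1 / (lam + d n) - c n) with hg
  set S : ℝ → ℝ := fun lam => ∑ n, g lam n with hS
  have hSsum : ∀ lam : ℝ, 0 ≤ lam →
      (∑ n, min (P n) (max 0 (1 / (lam + d n) - c n))) = S lam := by
    intro lam hlam
    refine Finset.sum_congr rfl fun n _ => ?_
    have hpos : 0 < lam + d n := by linarith [hd n]
    have h1 : 1 / (lam + d n) ≤ 1 / d n := one_div_le_one_div_of_le (hd n) (by linarith)
    have hle : max 0 (1 / (lam + d n) - c n) ≤ P n :=
      max_le (le_of_lt (hP n)) (by linarith [hmask n])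
    exact min_eq_right hle
  have hSnonneg : ∀ lam, 0 ≤ S lam :=
    fun lam => Finset.sum_nonneg fun n _ => le_max_left _ _
  have hmono : ∀ x y : ℝ, 0 ≤ x → x ≤ y → ∀ n, g y n ≤ g x n := by
    intro x y hx hxy n
    have hpx : 0 < x + d n := by linarith [hd n]
    have : 1 / (y + d n) ≤ 1 / (x + d n) := one_div_le_one_div_of_le hpx (by linarith)
    exact max_le_max le_rfl (by linarith)
  have hstrict : ∀ x y : ℝ, 0 ≤ x → x < y → 0 < S y → S y < S x := by
    intro x y hx hxy hSy
    obtain ⟨n, hn⟩ : ∃ n, 0 < g y n := by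
      by_contra h
      push_neg at h
      have : S y ≤ 0 := Finset.sum_nonpos fun n _ => h n
      linarith
    refine Finset.sum_lt_sum (fun i _ => hmono x y hx hxy.le i) ⟨n, Finset.mem_univ n, ?_⟩
    have hpx : 0 < x + d n := by linarith [hd n]
    have ha : 0 < 1 / (y + d n) - c n := by
      rcases lt_max_iff.mp hn with h | h
      · exact absurd h (lt_irrefl 0)
      · exact h
    have hlt : 1 / (y + d n) < 1 / (x + d n) := one_div_lt_one_div_of_lt hpx (by linarith)
    have hgy : g y n = 1 / (y + d n) - c n := max_eq_right ha.le
    have : 1 / (x + d n) - c n ≤ g x n := le_max_right _ _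
    rw [hgy]; linarith
  -- key uniqueness
  have key : ∀ x y : ℝ, (0 ≤ x ∧ S x ≤ Ptot ∧ x * (Ptot - S x) = 0) →
      (0 ≤ y ∧ S y ≤ Ptot ∧ y * (Ptot - S y) = 0) → x = y := by
    have main : ∀ x y : ℝ, x < y → (0 ≤ x ∧ S x ≤ Ptot ∧ x * (Ptot - S x) = 0) →
        (0 ≤ y ∧ S y ≤ Ptot ∧ y * (Ptot - S y) = 0) → False := by
      intro x y hxy ⟨hx0, hxle, _⟩ ⟨hy0, _, hycs⟩
      have hy : 0 < y := lt_of_le_of_lt hx0 hxy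
      have hSy : S y = Ptot := by
        rcases mul_eq_zero.mp hycs with h | h
        · exact absurd h (ne_of_gt hy)
        · linarith
      have := hstrict x y hx0 hxy (by rw [hSy]; exact hPtot)
      rw [hSy] at this
      linarith
    intro x y hx hy
    rcases lt_trichotomy x y with h | h | h
    · exact absurd (main x y h hx hy) not_false
    · exact h
    · exact absurd (main y x h hy hx) not_false
  -- existence
  have hex : ∃ lam : ℝ, 0 ≤ lam ∧ S lam ≤ Ptot ∧ lam * (Ptot - S lam) = 0 := by
    by_cases h0 : S 0 ≤ Ptot
    · exact ⟨0, le_refl 0, h0, by ring⟩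
    · push_neg at h0
      set Λ : ℝ := Ns / Ptot with hΛ
      have hΛpos : 0 < Λ := div_pos (by exact_mod_cast hNs) hPtot
      have hSΛ : S Λ ≤ Ptot := by
        have hb : ∀ n ∈ Finset.univ, g Λ n ≤ 1 / Λ := by
          intro n _
          have hpn : 0 < Λ + d n := by linarith [hd n]
          have h1 : 1 / (Λ + d n) ≤ 1 / Λ := one_div_le_one_div_of_le hΛpos (by linarith [hd n])
          refine max_le ?_ (by linarith [hc n])
          positivity
        have h1 : S Λ ≤ (Ns : ℝ) * (1 / Λ) := by
          simpa [Finset.card_univ, nsmul_eq_mul, hS] using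
            Finset.sum_le_card_nsmul Finset.univ (g Λ) (1 / Λ) hb
        have hNs' : (Ns : ℝ) ≠ 0 := by exact_mod_cast hNs.ne'
        have h2 : (Ns : ℝ) * (1 / Λ) = Ptot := by
          rw [hΛ]; field_simp
        linarith
      have hcont : ContinuousOn S (Set.Icc 0 Λ) := by
        apply continuousOn_finset_sum _
        intro n _
        apply ContinuousOn.sup continuousOn_const
        apply ContinuousOn.sub _ continuousOn_const
        apply ContinuousOn.div continuousOn_const
          ((continuous_id.add continuous_const).continuousOn)
        intro x hx
        have := hd n
        have := hx.1
        have hxpos : 0 < x + d n := by linarith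
        simpa using hxpos.ne'
      have hmem : Ptot ∈ Set.Icc (S Λ) (S 0) := ⟨hSΛ, h0.le⟩
      obtain ⟨lam, hlamIcc, hSlam⟩ := intermediate_value_Icc' hΛpos.le hcont hmem
      exact ⟨lam, hlamIcc.1, by rw [hSlam], by rw [hSlam]; ring⟩
  obtain ⟨lam, hlam0, hlamle, hlamcs⟩ := hex
  refine ⟨lam, ⟨hlam0, ?_, ?_⟩, ?_⟩
  · rw [hSsum lam hlam0]; exact hlamle
  · rw [hSsum lam hlam0]; exact hlamcs
  · intro y ⟨hy0, hy1, hy2⟩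
    rw [hSsum y hy0] at hy1 hy2
    exact key y lam ⟨hy0, hy1, hy2⟩ ⟨hlam0, hlamle, hlamcs⟩
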